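/- For every integer m ≥ 1: (i) I_m = {u ∈ ℕ^f ∖ {0} : u = E·x for some x ∈ ℝ^f with min_{0 ≤ i ≤ f−1} x_i > m − 1}; (ii) J_m = {u ∈ ℕ^f ∖ {0} : u = E·a for some a ∈ ℝ^f with min_{0 ≤ i ≤ f−1} a_i = m}. -/

import Mathlib

open Polynomial

/-- The power sum `S_d(-k) = ∑_{a monic, deg a = d} a^k`, written as a sum over the
lower-order coefficients of the monic polynomial. -/
noncomputable def powerSum (Fq : Type) [Field Fq] [Fintype Fq] (d k : ℕ) : Polynomial Fq :=
  ∑ c : Fin d → Fq, (X ^ d + ∑ i : Fin d, C (c i) * X ^ (i : ℕ)) ^ k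

/-- `m` sums to `k` with no carrying of digits in base `p`. -/
def NoCarry (p : ℕ) {n : ℕ} (m : Fin n → ℕ) (k : ℕ) : Prop :=
  (∑ i, m i) = k ∧ ∀ j : ℕ, (∑ i, m i / p ^ j % p) = k / p ^ j % p

/-- The set `U_d(k)`. -/
def Uset (p q d k : ℕ) : Set (Fin (d + 1) → ℕ) :=
  {m | NoCarry p m k ∧ ∀ i : Fin (d + 1), 0 < (i : ℕ) → 0 < m i ∧ (q - 1) ∣ m i}

/-- The weight of an element of `U_d(k)`. -/
def wtU {d : ℕ} (m : Fin (d + 1) → ℕ) : ℕ :=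
  ∑ i : Fin (d + 1), (d - (i : ℕ)) * m i

/-- Strict lexicographic order on tuples. -/
def LexLT {n : ℕ} (x y : Fin n → ℕ) : Prop :=
  ∃ i, (∀ j, j < i → x j = y j) ∧ x i < y i

/-- Lexicographic order on tuples. -/
def LexLE {n : ℕ} (x y : Fin n → ℕ) : Prop := x = y ∨ LexLT x y

/-- `L_k := min_{0 ≤ i < f} l(k p^i)/(q-1)` where `l` is the base-`q` digit sum, `q = p^f`. -/
noncomputable def Lval (p f k : ℕ) (hf : 0 < f) : ℚ :=
  (Finset.range f).inf' ⟨0, Finset.mem_range.mpr hf⟩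
    (fun i => ((Nat.digits (p ^ f) (k * p ^ i)).sum : ℚ) / ((p : ℚ) ^ f - 1))

/-- The set `W_d(N)` of compositions. -/
def Wset (p q d N : ℕ) : Set (Fin d → ℕ) :=
  {Y | NoCarry p Y N ∧ ∀ i : Fin d, (i : ℕ) + 1 < d → 0 < Y i ∧ (q - 1) ∣ Y i}

/-- The weight of a composition. -/
def wtW {d : ℕ} (Y : Fin d → ℕ) : ℕ := ∑ i : Fin d, ((i : ℕ) + 1) * Y i

/-- `X` is the modest (lexicographically largest) composition in `W_d(N)`. -/
def Modest (p q : ℕ) {d : ℕ} (N : ℕ) (X : Fin d → ℕ) : Prop :=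
  X ∈ Wset p q d N ∧ ∀ Y ∈ Wset p q d N, LexLE Y X

/-- `X` is an optimal (minimum weight) composition in `W_d(N)`. -/
def Optimal (p q : ℕ) {d : ℕ} (N : ℕ) (X : Fin d → ℕ) : Prop :=
  X ∈ Wset p q d N ∧ ∀ Y ∈ Wset p q d N, wtW X ≤ wtW Y

/-- `Γ(n) : Fin f → ℕ`, summing the base-`p` digits of `n` in each residue class mod `f`. -/
def Gamma (p f n : ℕ) : Fin f → ℕ :=
  fun i => ∑ j ∈ Finset.range (Nat.log p n + 1), if j % f = (i : ℕ) then n / p ^ j % p else 0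

/-- The cyclic matrix `E`, as a map: `(E x)_i = p x_{i+1} - x_i`, indices mod `f`. -/
def Emap (p : ℕ) {R : Type} [Ring R] {f : ℕ} (x : Fin f → R) : Fin f → R :=
  fun i => (p : R) * x ⟨((i : ℕ) + 1) % f, Nat.mod_lt _ i.pos⟩ - x i

/-- `𝔍 = {Γ(n) : n > 0 is q-even}`, where `q = p ^ f`. -/
def Jfrak (p f : ℕ) : Set (Fin f → ℕ) :=
  {w | ∃ n : ℕ, 0 < n ∧ (p ^ f - 1) ∣ n ∧ Gamma p f n = w}

/-- `I_d`. -/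
def Iset (p f d : ℕ) : Set (Fin f → ℕ) :=
  {u | (∃ n : ℕ, 0 < n ∧ Gamma p f n = u) ∧
    ∃ v : Fin (d - 1) → Fin f → ℕ, (∀ j, v j ∈ Jfrak p f) ∧ (∑ j, v j) < u}

/-- `J_d`. -/
def Jset (p f d : ℕ) : Set (Fin f → ℕ) :=
  if d = 0 then ∅ else Jfrak p f ∩ (Iset p f d \ Iset p f (d + 1))

/-- A composition is `τ`-monotonic. -/
def TauMonotonic (p f : ℕ) {d : ℕ} (X : Fin d → ℕ) : Prop :=
  ∀ i j : Fin d, i < j → ∀ m n : ℕ, X i / p ^ m % p ≠ 0 → X j / p ^ n % p ≠ 0 →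
    m % f = n % f → n ≤ m

/-- `W_d^B(N)`: compositions in `W_d(N)` whose `Γ`-matrix is `B`. -/
def WBset (p f d N : ℕ) (B : Fin d → Fin f → ℕ) : Set (Fin d → ℕ) :=
  {Y | Y ∈ Wset p (p ^ f) d N ∧ ∀ j, Gamma p f (Y j) = B j}

/-- The multizeta value `ζ(-k_1, …, -k_r)` as a (finite) sum over strictly
decreasing tuples of degrees. -/
noncomputable def multizeta (Fq : Type) [Field Fq] [Fintype Fq] {r : ℕ} (k : Fin r → ℕ) :
    Polynomial Fq :=
  ∑ᶠ (dt : Fin r → ℕ) (_ : StrictAnti dt), ∏ i, powerSum Fq (dt i) (k i)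


namespace Sheats

/-- `S_i(u) = ∑_{j<f} p^j u_{(i+j) % f}`. -/
def Sv (p : ℕ) {f : ℕ} (hf : 0 < f) (i : ℕ) (u : Fin f → ℕ) : ℕ :=
  ∑ j ∈ Finset.range f, p ^ j * u ⟨(i + j) % f, Nat.mod_lt _ hf⟩

variable {p f : ℕ} (hf : 0 < f)

lemma Sv_mod (i : ℕ) (u : Fin f → ℕ) : Sv p hf (i % f) u = Sv p hf i u := by
  unfold Sv
  refine Finset.sum_congr rfl fun j _ => ?_
  congr 1
  exact congrArg u (Fin.mk_eq_mk.mpr (Nat.mod_add_mod i f j))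

lemma Sv_succ (hp : 0 < p) (i : ℕ) (u : Fin f → ℕ) :
    p * Sv p hf (i + 1) u = Sv p hf i u + (p ^ f - 1) * u ⟨i % f, Nat.mod_lt _ hf⟩ := by
  have e1 : ∑ j ∈ Finset.range (f + 1), p ^ j * u ⟨(i + j) % f, Nat.mod_lt _ hf⟩
      = Sv p hf i u + p ^ f * u ⟨i % f, Nat.mod_lt _ hf⟩ := by
    rw [Finset.sum_range_succ]
    congr 2
    exact congrArg u (Fin.mk_eq_mk.mpr (Nat.add_mod_right i f))
  have e2 : ∑ j ∈ Finset.range (f + 1), p ^ j * u ⟨(i + j) % f, Nat.mod_lt _ hf⟩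
      = u ⟨i % f, Nat.mod_lt _ hf⟩ + p * Sv p hf (i + 1) u := by
    rw [Finset.sum_range_succ']
    have e3 : ∀ j, p ^ (j + 1) * u ⟨(i + (j + 1)) % f, Nat.mod_lt _ hf⟩
        = p * (p ^ j * u ⟨(i + 1 + j) % f, Nat.mod_lt _ hf⟩) := by
      intro j
      rw [pow_succ, show i + (j + 1) = i + 1 + j by ring]
      ring
    rw [Finset.sum_congr rfl fun j _ => e3 j, ← Finset.mul_sum]
    simp only [pow_zero, one_mul, Nat.add_zero]
    rw [add_comm]
    rfl
  have e := e1.symm.trans e2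
  have hP : 1 ≤ p ^ f := Nat.one_le_pow _ _ hp
  set A := Sv p hf i u
  set B := Sv p hf (i + 1) u
  set C := u ⟨i % f, Nat.mod_lt _ hf⟩
  have h1 : (p ^ f - 1) * C = p ^ f * C - C := by rw [Nat.sub_mul, one_mul]
  have h2 : C ≤ p ^ f * C := Nat.le_mul_of_pos_left _ hP
  omega

lemma Sv_add (i : ℕ) (u w : Fin f → ℕ) :
    Sv p hf i (u + w) = Sv p hf i u + Sv p hf i w := by
  unfold Sv
  rw [← Finset.sum_add_distrib]
  exact Finset.sum_congr rfl fun j _ => by simp [Pi.add_apply, Nat.mul_add]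

lemma Sv_zero (i : ℕ) : Sv p hf i (0 : Fin f → ℕ) = 0 := by simp [Sv]

lemma Sv_sum {ι : Type*} (s : Finset ι) (v : ι → Fin f → ℕ) (i : ℕ) :
    Sv p hf i (∑ j ∈ s, v j) = ∑ j ∈ s, Sv p hf i (v j) := by
  classical
  induction s using Finset.induction_on with
  | empty => simp [Sv_zero]
  | insert _ _ hx ih => rw [Finset.sum_insert hx, Sv_add, ih, Finset.sum_insert hx]

lemma exists_shift (i : ℕ) (k : Fin f) : ∃ j, j < f ∧ (i + j) % f = (k : ℕ) := by
  have hf' : 0 < f := k.pos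
  refine ⟨(f + (k : ℕ) - i % f) % f, Nat.mod_lt _ hf', ?_⟩
  have h1 : i % f ≤ i := Nat.mod_le _ _
  have h2 : i % f < f := Nat.mod_lt _ hf'
  have h3 : f * (i / f) + i % f = i := Nat.div_add_mod i f
  have key : i + (f + (k : ℕ) - i % f) = f * (i / f) + (f + (k : ℕ)) := by omega
  rw [Nat.add_mod, Nat.mod_mod_of_dvd _ dvd_rfl, ← Nat.add_mod, key, Nat.mul_add_mod,
    Nat.add_mod_left, Nat.mod_eq_of_lt k.isLt]

lemma Sv_pos (hp : 0 < p) (i : ℕ) {u : Fin f → ℕ} (hu : u ≠ 0) :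
    0 < Sv p hf i u := by
  obtain ⟨k, hk⟩ := Function.ne_iff.mp hu
  obtain ⟨j, hj, hjk⟩ := exists_shift i k
  have hmem : j ∈ Finset.range f := Finset.mem_range.mpr hj
  have hterm : 0 < p ^ j * u ⟨(i + j) % f, Nat.mod_lt _ hf⟩ := by
    have he : (⟨(i + j) % f, Nat.mod_lt _ hf⟩ : Fin f) = k := Fin.ext (by simpa using hjk)
    rw [he]
    have : u k ≠ 0 := hk
    exact Nat.mul_pos (Nat.pow_pos hp) (by omega)
  refine lt_of_lt_of_le hterm ?_
  unfold Sv
  exact Finset.single_le_sum (f := fun j => p ^ j * u ⟨(i + j) % f, Nat.mod_lt _ hf⟩)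
    (fun _ _ => Nat.zero_le _) hmem

lemma Sv_ne_zero {i : ℕ} {u : Fin f → ℕ} (hp : 0 < p) (h : 0 < Sv p hf i u) : u ≠ 0 := by
  intro h0
  rw [h0, Sv_zero] at h
  omega

lemma coprime_pQ (hf' : 0 < f) (hp : 0 < p) : Nat.Coprime p (p ^ f - 1) := by
  have hP : 1 ≤ p ^ f := Nat.one_le_pow _ _ hp
  have hd : Nat.gcd p (p ^ f - 1) ∣ 1 := by
    have h1 : Nat.gcd p (p ^ f - 1) ∣ p ^ f :=
      (Nat.gcd_dvd_left _ _).trans (dvd_pow_self p hf'.ne')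
    have h3 := Nat.dvd_sub h1 (Nat.gcd_dvd_right _ _)
    simpa [Nat.sub_sub_self hP] using h3
  exact Nat.dvd_one.mp hd

lemma dvd_Sv_all (hp : 0 < p) {u : Fin f → ℕ} {i₀ : ℕ}
    (h : (p ^ f - 1) ∣ Sv p hf i₀ u) : ∀ i : ℕ, (p ^ f - 1) ∣ Sv p hf i u := by
  have step : ∀ j : ℕ, (p ^ f - 1) ∣ Sv p hf (i₀ + j) u := by
    intro j
    induction j with
    | zero => simpa using h
    | succ j ih =>
      have hs := Sv_succ hf hp (i₀ + j) u
      have hdvd : (p ^ f - 1) ∣ p * Sv p hf (i₀ + j + 1) u := by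
        rw [hs]
        exact Nat.dvd_add ih (Dvd.intro _ rfl)
      exact (Nat.Coprime.dvd_of_dvd_mul_left ((coprime_pQ hf hp).symm) hdvd)
  intro i
  obtain ⟨j, hj, hjk⟩ := exists_shift i₀ (⟨i % f, Nat.mod_lt _ hf⟩ : Fin f)
  have : Sv p hf i u = Sv p hf (i₀ + j) u := by
    rw [← Sv_mod hf i u, ← Sv_mod hf (i₀ + j) u]
    simp only at hjk
    rw [hjk]
  rw [this]
  exact step j

end Sheats

namespace Sheats

variable {p f : ℕ} (hf : 0 < f)

lemma digit_sum_div_pow (hp : 1 < p) :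
    ∀ (j K : ℕ) (e : ℕ → ℕ), (∀ k, e k < p) →
    (∑ k ∈ Finset.range K, e k * p ^ k) / p ^ j % p = if j < K then e j else 0 := by
  intro j
  induction j with
  | zero =>
    intro K e he
    cases K with
    | zero => simp
    | succ K =>
      rw [Finset.sum_range_succ']
      have h1 : ∑ k ∈ Finset.range K, e (k + 1) * p ^ (k + 1)
          = (∑ k ∈ Finset.range K, e (k + 1) * p ^ k) * p := by
        rw [Finset.sum_mul]
        exact Finset.sum_congr rfl fun k _ => by rw [pow_succ]; ring
      rw [h1, if_pos (Nat.succ_pos K)]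
      simp only [pow_zero, Nat.mul_one, Nat.div_one]
      rw [Nat.add_comm, Nat.add_mul_mod_self_right, Nat.mod_eq_of_lt (he 0)]
  | succ j ih =>
    intro K e he
    cases K with
    | zero => simp
    | succ K =>
      rw [Finset.sum_range_succ']
      have h1 : ∑ k ∈ Finset.range K, e (k + 1) * p ^ (k + 1)
          = (∑ k ∈ Finset.range K, e (k + 1) * p ^ k) * p := by
        rw [Finset.sum_mul]
        exact Finset.sum_congr rfl fun k _ => by rw [pow_succ]; ring
      have hp0 : 0 < p := by omega
      rw [h1]
      simp only [pow_zero, Nat.mul_one]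
      have h2 : ((∑ k ∈ Finset.range K, e (k + 1) * p ^ k) * p + e 0) / p ^ (j + 1)
          = (∑ k ∈ Finset.range K, e (k + 1) * p ^ k) / p ^ j := by
        rw [pow_succ', ← Nat.div_div_eq_div_mul, mul_comm (∑ k ∈ Finset.range K, e (k + 1) * p ^ k) p,
          Nat.mul_add_div hp0, Nat.div_eq_of_lt (he 0), Nat.add_zero]
      rw [h2, ih K (fun k => e (k + 1)) (fun k => he (k + 1))]
      simp [Nat.succ_lt_succ_iff]

lemma sum_digits_lt (hp : 1 < p) (e : ℕ → ℕ) (he : ∀ k, e k < p) (K : ℕ) :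
    ∑ k ∈ Finset.range K, e k * p ^ k < p ^ K := by
  induction K with
  | zero => simp
  | succ K ih =>
    rw [Finset.sum_range_succ]
    have h1 : e K * p ^ K + p ^ K ≤ p * p ^ K := by
      have h0 : (e K + 1) * p ^ K ≤ p * p ^ K :=
        Nat.mul_le_mul_right _ (by have := he K; omega)
      rw [add_mul, one_mul] at h0
      exact h0
    have h3 : p ^ (K + 1) = p * p ^ K := by rw [pow_succ]; ring
    omega

lemma digit_expansion (hp : 1 < p) (n : ℕ) :
    ∀ K : ℕ, ∑ k ∈ Finset.range K, (n / p ^ k % p) * p ^ k = n % p ^ K := by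
  intro K
  induction K with
  | zero => simp [Nat.mod_one]
  | succ K ih =>
    rw [Finset.sum_range_succ, ih]
    have h1 : n % p ^ (K + 1) = n % p ^ K + p ^ K * (n / p ^ K % p) := by
      rw [pow_succ, Nat.mod_mul]
    have h2 : (n / p ^ K % p) * p ^ K = p ^ K * (n / p ^ K % p) := Nat.mul_comm _ _
    omega

/-- collapse a `Fin f`-indexed sum of `if r = i` terms -/
lemma sum_ite_fin {M : Type*} [AddCommMonoid M] {r : ℕ} (hr : r < f) (c : Fin f → M) :
    ∑ i : Fin f, (if r = (i : ℕ) then c i else 0) = c ⟨r, hr⟩ := by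
  rw [Finset.sum_eq_single (⟨r, hr⟩ : Fin f)]
  · simp
  · intro b _ hb
    rw [if_neg]
    intro h
    exact hb (Fin.ext h.symm)
  · intro h
    exact absurd (Finset.mem_univ _) h

lemma n_modEq_Sv_Gamma (hp : 1 < p) (n : ℕ) :
    n ≡ Sv p hf 0 (Gamma p f n) [MOD p ^ f - 1] := by
  set Q := p ^ f - 1 with hQdef
  have hP : 1 ≤ p ^ f := Nat.one_le_pow _ _ (by omega)
  rw [← ZMod.natCast_eq_natCast_iff]
  set K := Nat.log p n + 1 with hK
  have hn : n < p ^ K := Nat.lt_pow_succ_log_self hp n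
  have hdig : ∑ k ∈ Finset.range K, (n / p ^ k % p) * p ^ k = n := by
    rw [digit_expansion hp n K, Nat.mod_eq_of_lt hn]
  have hpf1 : (p : ZMod Q) ^ f = 1 := by
    have h1 : ((p ^ f : ℕ) : ZMod Q) = ((Q + 1 : ℕ) : ZMod Q) := by
      congr 1
      omega
    push_cast at h1
    rw [ZMod.natCast_self] at h1
    simpa using h1
  have hpk : ∀ k : ℕ, (p : ZMod Q) ^ k = (p : ZMod Q) ^ (k % f) := by
    intro k
    conv_lhs => rw [← Nat.div_add_mod k f]
    rw [pow_add, pow_mul, hpf1, one_pow, one_mul]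
  calc ((n : ℕ) : ZMod Q)
      = ((∑ k ∈ Finset.range K, (n / p ^ k % p) * p ^ k : ℕ) : ZMod Q) := by rw [hdig]
    _ = ∑ k ∈ Finset.range K, ((n / p ^ k % p : ℕ) : ZMod Q) * (p : ZMod Q) ^ (k % f) := by
        push_cast
        exact Finset.sum_congr rfl fun k _ => by rw [← hpk k]
    _ = ∑ k ∈ Finset.range K, ∑ i : Fin f,
          (if k % f = (i : ℕ) then ((n / p ^ k % p : ℕ) : ZMod Q) * (p : ZMod Q) ^ (i : ℕ) else 0) := by
        refine Finset.sum_congr rfl fun k _ => ?_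
        rw [sum_ite_fin (Nat.mod_lt _ hf) (fun i => ((n / p ^ k % p : ℕ) : ZMod Q) * (p : ZMod Q) ^ (i : ℕ))]
    _ = ∑ i : Fin f, (((Gamma p f n i : ℕ)) : ZMod Q) * (p : ZMod Q) ^ (i : ℕ) := by
        rw [Finset.sum_comm]
        refine Finset.sum_congr rfl fun i _ => ?_
        rw [Gamma]
        push_cast
        rw [Finset.sum_mul]
        refine Finset.sum_congr rfl fun k _ => ?_
        split_ifs <;> simp
    _ = ((Sv p hf 0 (Gamma p f n) : ℕ) : ZMod Q) := by
        rw [Sv]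
        push_cast
        rw [Finset.sum_range (n := f)]
        refine Finset.sum_congr rfl fun i _ => ?_
        have hidx : (⟨(0 + (i : ℕ)) % f, Nat.mod_lt _ hf⟩ : Fin f) = i := by
          apply Fin.ext
          simp [Nat.mod_eq_of_lt i.isLt]
        rw [hidx, mul_comm]

lemma Gamma_ne_zero (hf : 0 < f) (hp : 1 < p) {n : ℕ} (hn : 0 < n) : Gamma p f n ≠ (0 : Fin f → ℕ) := by
  set l := Nat.log p n with hl
  have h1 : p ^ l ≤ n := Nat.pow_log_le_self p hn.ne'
  have h2 : n < p ^ (l + 1) := Nat.lt_pow_succ_log_self hp n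
  have hpl : 0 < p ^ l := Nat.pow_pos (by omega)
  have hdiv : 0 < n / p ^ l := Nat.one_le_div_iff hpl |>.mpr h1
  have hdivlt : n / p ^ l < p := by
    rw [Nat.div_lt_iff_lt_mul hpl]
    exact h2.trans_le (le_of_eq (pow_succ' p l))
  have hD : 0 < n / p ^ l % p := by rw [Nat.mod_eq_of_lt hdivlt]; exact hdiv
  intro h0
  have hΓ : Gamma p f n ⟨l % f, Nat.mod_lt _ hf⟩ = 0 := by rw [h0]; rfl
  rw [Gamma] at hΓ
  have hmem : l ∈ Finset.range (Nat.log p n + 1) := Finset.mem_range.mpr (by omega)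
  have hsum : (if l % f = ((⟨l % f, Nat.mod_lt _ hf⟩ : Fin f) : ℕ) then n / p ^ l % p else 0)
      ≤ ∑ j ∈ Finset.range (Nat.log p n + 1),
        (if j % f = ((⟨l % f, Nat.mod_lt _ hf⟩ : Fin f) : ℕ) then n / p ^ j % p else 0) :=
    Finset.single_le_sum (f := fun j => if j % f = ((⟨l % f, Nat.mod_lt _ hf⟩ : Fin f) : ℕ) then n / p ^ j % p else 0) (fun _ _ => Nat.zero_le _) hmem
  rw [hΓ] at hsum
  have hcond : l % f = ((⟨l % f, Nat.mod_lt _ hf⟩ : Fin f) : ℕ) := rfl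
  rw [if_pos hcond] at hsum
  omega

lemma sum_indicator_lt (c T : ℕ) :
    ∑ t ∈ Finset.range T, (if t < c then 1 else 0) = min c T := by
  induction T with
  | zero => simp
  | succ T ih =>
    rw [Finset.sum_range_succ, ih]
    split_ifs with h <;> omega

lemma Gamma_surj (hf : 0 < f) (hp : 1 < p) {u : Fin f → ℕ} (hu : u ≠ 0) :
    ∃ n : ℕ, 0 < n ∧ Gamma p f n = u := by
  set T := ∑ i, u i with hT
  have hTle : ∀ i, u i ≤ T := fun i =>
    Finset.single_le_sum (fun _ _ => Nat.zero_le _) (Finset.mem_univ i)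
  set e : ℕ → ℕ := fun k => if k / f < u ⟨k % f, Nat.mod_lt _ hf⟩ then 1 else 0 with he_def
  have he : ∀ k, e k < p := by
    intro k
    simp only [he_def]
    split <;> omega
  set n := ∑ k ∈ Finset.range (f * T), e k * p ^ k with hn
  have hD : ∀ j, n / p ^ j % p = if j < f * T then e j else 0 := fun j =>
    digit_sum_div_pow hp j (f * T) e he
  -- positivity
  obtain ⟨k₀, hk₀⟩ := Function.ne_iff.mp hu
  have hk₀' : u k₀ ≠ 0 := hk₀
  have hT1 : 1 ≤ T := le_trans (by omega) (hTle k₀)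
  have hk₀f : (k₀ : ℕ) < f * T := by
    calc (k₀ : ℕ) < f := k₀.isLt
      _ = f * 1 := by ring
      _ ≤ f * T := Nat.mul_le_mul_left _ hT1
  have h1 : (k₀ : ℕ) % f = (k₀ : ℕ) := Nat.mod_eq_of_lt k₀.isLt
  have h2 : (k₀ : ℕ) / f = 0 := Nat.div_eq_of_lt k₀.isLt
  have hfin : (⟨(k₀ : ℕ) % f, Nat.mod_lt _ hf⟩ : Fin f) = k₀ := Fin.ext (by simpa using h1)
  have hek₀ : e (k₀ : ℕ) = 1 := by
    simp only [he_def]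
    split_ifs with h
    · rfl
    · exfalso
      apply h
      rw [h2, hfin]
      omega
  have hnpos : 0 < n := by
    have hmem : (k₀ : ℕ) ∈ Finset.range (f * T) := Finset.mem_range.mpr hk₀f
    have : e (k₀ : ℕ) * p ^ (k₀ : ℕ) ≤ n :=
      Finset.single_le_sum (f := fun k => e k * p ^ k) (fun _ _ => Nat.zero_le _) hmem
    have hpk : 0 < p ^ (k₀ : ℕ) := Nat.pow_pos (by omega)
    rw [hek₀, one_mul] at this
    omega
  refine ⟨n, hnpos, ?_⟩
  funext i
  rw [Gamma]
  set K := Nat.log p n + 1 with hK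
  set R := max K (f * T) with hR
  have hnltK : n < p ^ K := Nat.lt_pow_succ_log_self hp n
  have step1 : ∑ j ∈ Finset.range K, (if j % f = (i : ℕ) then n / p ^ j % p else 0)
      = ∑ j ∈ Finset.range R, (if j % f = (i : ℕ) then n / p ^ j % p else 0) := by
    apply Finset.sum_subset
    · exact Finset.range_subset_range.mpr (le_max_left _ _)
    · intro j _ hj
      rw [Finset.mem_range, not_lt] at hj
      have : n < p ^ j := lt_of_lt_of_le hnltK (Nat.pow_le_pow_right (by omega) hj)
      rw [Nat.div_eq_of_lt this]
      simp
  have hsub : Finset.range (f * T) ⊆ Finset.range R :=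
    Finset.range_subset_range.mpr (le_max_right _ _)
  have step2 : ∑ j ∈ Finset.range R, (if j % f = (i : ℕ) then n / p ^ j % p else 0)
      = ∑ j ∈ Finset.range (f * T), (if j % f = (i : ℕ) then e j else 0) := by
    have e1 : ∀ j, (if j % f = (i : ℕ) then n / p ^ j % p else 0)
        = (if j % f = (i : ℕ) then (if j < f * T then e j else 0) else 0) := fun j => by
      rw [hD j]
    calc ∑ j ∈ Finset.range R, (if j % f = (i : ℕ) then n / p ^ j % p else 0)
        = ∑ j ∈ Finset.range R, (if j % f = (i : ℕ) then (if j < f * T then e j else 0) else 0) :=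
          Finset.sum_congr rfl fun j _ => e1 j
      _ = ∑ j ∈ Finset.range (f * T), (if j % f = (i : ℕ) then (if j < f * T then e j else 0) else 0) := by
          refine (Finset.sum_subset hsub ?_).symm
          intro j _ hj
          rw [Finset.mem_range, not_lt] at hj
          split_ifs with h1 h2 <;> omega
      _ = ∑ j ∈ Finset.range (f * T), (if j % f = (i : ℕ) then e j else 0) := by
          refine Finset.sum_congr rfl fun j hj => ?_
          rw [Finset.mem_range] at hj
          rw [if_pos hj]
  rw [step1, step2]
  -- now compute the block sum
  have hblock : ∀ t : ℕ, ∑ r ∈ Finset.range f, (if (f * t + r) % f = (i : ℕ) then e (f * t + r) else 0)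
      = (if t < u i then 1 else 0) := by
    intro t
    have hterm : ∀ r, r ∈ Finset.range f →
        (if (f * t + r) % f = (i : ℕ) then e (f * t + r) else 0)
        = (if r = (i : ℕ) then (if t < u ⟨r % f, Nat.mod_lt _ hf⟩ then 1 else 0) else 0) := by
      intro r hr
      rw [Finset.mem_range] at hr
      have h1 : (f * t + r) % f = r % f := Nat.mul_add_mod f t r
      have h2 : r % f = r := Nat.mod_eq_of_lt hr
      have h3 : (f * t + r) / f = t := by
        rw [Nat.mul_add_div hf, Nat.div_eq_of_lt hr, Nat.add_zero]
      simp only [he_def, h1, h2, h3]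
    rw [Finset.sum_congr rfl hterm]
    rw [Finset.sum_ite_eq' (Finset.range f) ((i : ℕ))
      (fun r => if t < u ⟨r % f, Nat.mod_lt _ hf⟩ then 1 else 0)]
    rw [if_pos (Finset.mem_range.mpr i.isLt)]
    congr 2
    apply congrArg
    apply Fin.ext
    simp [Nat.mod_eq_of_lt i.isLt]
  have hsplit : ∀ T' : ℕ, ∑ j ∈ Finset.range (f * T'), (if j % f = (i : ℕ) then e j else 0)
      = ∑ t ∈ Finset.range T', (if t < u i then 1 else 0) := by
    intro T'
    induction T' with
    | zero => simp
    | succ T' ih =>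
      rw [Nat.mul_succ, Finset.sum_range_add, ih, Finset.sum_range_succ]
      congr 1
      exact hblock T'
  rw [hsplit T, sum_indicator_lt, min_eq_left (hTle i)]

end Sheats

namespace Sheats

noncomputable def xr (p : ℕ) {f : ℕ} (hf : 0 < f) (u : Fin f → ℕ) : Fin f → ℝ :=
  fun i => (Sv p hf (i : ℕ) u : ℝ) / ((p ^ f - 1 : ℕ) : ℝ)

variable {p f : ℕ}

lemma Sv_succ' (hf : 0 < f) (hp : 1 < p) (u : Fin f → ℕ) (i : Fin f) :
    p * Sv p hf ((i : ℕ) + 1) u = Sv p hf (i : ℕ) u + (p ^ f - 1) * u i := by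
  have h2 := Sv_succ hf (by omega : 0 < p) (i : ℕ) u
  have h3 : (⟨(i : ℕ) % f, Nat.mod_lt _ hf⟩ : Fin f) = i := Fin.ext (Nat.mod_eq_of_lt i.isLt)
  rw [h3] at h2
  exact h2

lemma Emap_xr (hf : 0 < f) (hp : 1 < p) (u : Fin f → ℕ) :
    (fun i => (u i : ℝ)) = Emap p (xr p hf u) := by
  have hQ1 : 1 < p ^ f := Nat.one_lt_pow hf.ne' hp
  have hQR : ((p ^ f - 1 : ℕ) : ℝ) ≠ 0 := Nat.cast_ne_zero.mpr (by omega)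
  funext i
  show (u i : ℝ) = (p : ℝ) * xr p hf u ⟨((i : ℕ) + 1) % f, Nat.mod_lt _ i.pos⟩ - xr p hf u i
  have h1 : xr p hf u ⟨((i : ℕ) + 1) % f, Nat.mod_lt _ i.pos⟩
      = (Sv p hf ((i : ℕ) + 1) u : ℝ) / ((p ^ f - 1 : ℕ) : ℝ) := by
    unfold xr
    congr 2
    exact Sv_mod hf _ u
  have h2R : (p : ℝ) * (Sv p hf ((i : ℕ) + 1) u : ℝ)
      = (Sv p hf (i : ℕ) u : ℝ) + ((p ^ f - 1 : ℕ) : ℝ) * (u i : ℝ) := by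
    exact_mod_cast congrArg (Nat.cast : ℕ → ℝ) (Sv_succ' hf hp u i)
  rw [h1]
  unfold xr
  rw [mul_div_assoc', div_sub_div_same, eq_comm, div_eq_iff hQR]
  linarith [h2R]

lemma E_unique (hf : 0 < f) (hp : 1 < p) (u : Fin f → ℕ) (x : Fin f → ℝ)
    (hx : (fun i => (u i : ℝ)) = Emap p x) :
    ∀ i : Fin f, x i = (Sv p hf (i : ℕ) u : ℝ) / ((p ^ f - 1 : ℕ) : ℝ) := by
  have key : ∀ k : ℕ, ∀ i : Fin f, (p : ℝ) ^ k * x ⟨((i : ℕ) + k) % f, Nat.mod_lt _ hf⟩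
      = x i + ∑ j ∈ Finset.range k, (p : ℝ) ^ j * (u ⟨((i : ℕ) + j) % f, Nat.mod_lt _ hf⟩ : ℝ) := by
    intro k
    induction k with
    | zero =>
      intro i
      have h0 : (⟨(i : ℕ) % f, Nat.mod_lt _ hf⟩ : Fin f) = i :=
        Fin.ext (Nat.mod_eq_of_lt i.isLt)
      simp [h0]
    | succ k ih =>
      intro i
      have hstep := congrFun hx ⟨((i : ℕ) + k) % f, Nat.mod_lt _ hf⟩
      simp only [Emap] at hstep
      have hidx : (⟨((((i : ℕ) + k) % f) + 1) % f,
          Nat.mod_lt _ (Fin.pos ⟨((i : ℕ) + k) % f, Nat.mod_lt _ hf⟩)⟩ : Fin f)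
          = ⟨((i : ℕ) + (k + 1)) % f, Nat.mod_lt _ hf⟩ := by
        apply Fin.ext
        show ((((i : ℕ) + k) % f) + 1) % f = ((i : ℕ) + (k + 1)) % f
        rw [Nat.mod_add_mod, ← Nat.add_assoc]
      rw [hidx] at hstep
      have hpx : (p : ℝ) * x ⟨((i : ℕ) + (k + 1)) % f, Nat.mod_lt _ hf⟩
          = x ⟨((i : ℕ) + k) % f, Nat.mod_lt _ hf⟩
            + (u ⟨((i : ℕ) + k) % f, Nat.mod_lt _ hf⟩ : ℝ) := by
        rw [hstep]; ring
      rw [Finset.sum_range_succ]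
      linear_combination (p : ℝ) ^ k * hpx + ih i
  intro i
  have hk := key f i
  have hIdx : (⟨((i : ℕ) + f) % f, Nat.mod_lt _ hf⟩ : Fin f) = i := by
    apply Fin.ext
    show ((i : ℕ) + f) % f = (i : ℕ)
    rw [Nat.add_mod_right]
    exact Nat.mod_eq_of_lt i.isLt
  rw [hIdx] at hk
  have hSv : ((Sv p hf (i : ℕ) u : ℕ) : ℝ)
      = ∑ j ∈ Finset.range f, (p : ℝ) ^ j * (u ⟨((i : ℕ) + j) % f, Nat.mod_lt _ hf⟩ : ℝ) := by
    unfold Sv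
    push_cast
    rfl
  have hQ1 : 1 < p ^ f := Nat.one_lt_pow hf.ne' hp
  have hQR : ((p ^ f - 1 : ℕ) : ℝ) = (p : ℝ) ^ f - 1 := by
    rw [Nat.cast_sub (by omega : 1 ≤ p ^ f)]
    push_cast
    ring
  have hne : (p : ℝ) ^ f - 1 ≠ 0 := by
    have h1 : (1 : ℝ) < (p : ℝ) ^ f := by
      have hcast : ((1 : ℕ) : ℝ) < ((p ^ f : ℕ) : ℝ) := Nat.cast_lt.mpr hQ1
      push_cast at hcast
      exact hcast
    linarith
  rw [hQR, eq_div_iff hne, hSv]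
  linear_combination hk

lemma step_lemma (hf : 0 < f) (hp : 1 < p) (c : ℕ) (hc : 1 ≤ c) (u : Fin f → ℕ)
    (hu : ∀ i : Fin f, c * (p ^ f - 1) < Sv p hf (i : ℕ) u) :
    ∃ w : Fin f → ℕ, (∀ i, w i ≤ u i) ∧ w ≠ 0 ∧ ((p ^ f - 1) ∣ Sv p hf 0 w) ∧
      ∀ i : Fin f, Sv p hf (i : ℕ) w + (c - 1) * (p ^ f - 1) < Sv p hf (i : ℕ) u := by
  have hp0 : 0 < p := by omega
  have hQ1' : 1 < p ^ f := Nat.one_lt_pow hf.ne' hp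
  have hQ1 : 1 ≤ p ^ f - 1 := by omega
  have hcQ : (c - 1) * (p ^ f - 1) + (p ^ f - 1) = c * (p ^ f - 1) := by
    have h : (c - 1) + 1 = c := by omega
    calc (c - 1) * (p ^ f - 1) + (p ^ f - 1) = ((c - 1) + 1) * (p ^ f - 1) := by ring
      _ = c * (p ^ f - 1) := by rw [h]
  set nx : Fin f → Fin f := fun i => ⟨((i : ℕ) + 1) % f, Nat.mod_lt _ hf⟩ with hnx
  have hSvnx : ∀ (Z : Fin f → ℕ) (i : Fin f), Sv p hf ((nx i : Fin f) : ℕ) Z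
      = Sv p hf ((i : ℕ) + 1) Z := fun Z i => Sv_mod hf _ Z
  set Good : (Fin f → ℕ) → Prop := fun Z =>
    ∀ i : Fin f, (Z i ≡ Sv p hf (i : ℕ) u [MOD (p ^ f - 1)]) ∧ ((c - 1) * (p ^ f - 1) < Z i) ∧
      (p * Z (nx i) ≤ Z i + (p ^ f - 1) * u i) with hGood
  have hQle : ∀ i : Fin f, p ^ f - 1 ≤ Sv p hf (i : ℕ) u := by
    intro i
    have := hu i
    have h2 : p ^ f - 1 ≤ c * (p ^ f - 1) := Nat.le_mul_of_pos_left _ hc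
    omega
  -- the two starting elements
  have hG1 : Good (fun i => Sv p hf (i : ℕ) u) := by
    intro i
    refine ⟨Nat.ModEq.refl _, ?_, ?_⟩
    · show (c - 1) * (p ^ f - 1) < Sv p hf (i : ℕ) u
      have h1 := hu i
      have h2 : (c - 1) * (p ^ f - 1) ≤ c * (p ^ f - 1) :=
        Nat.mul_le_mul_right _ (by omega)
      omega
    · show p * Sv p hf ((nx i : Fin f) : ℕ) u ≤ Sv p hf (i : ℕ) u + (p ^ f - 1) * u i
      rw [hSvnx u i, Sv_succ' hf hp u i]
  have hG2 : Good (fun i => Sv p hf (i : ℕ) u - (p ^ f - 1)) := by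
    intro i
    have hle := hQle i
    refine ⟨?_, ?_, ?_⟩
    · show Sv p hf (i : ℕ) u - (p ^ f - 1) ≡ Sv p hf (i : ℕ) u [MOD p ^ f - 1]
      have h : (p ^ f - 1) ∣ (Sv p hf (i : ℕ) u - (Sv p hf (i : ℕ) u - (p ^ f - 1))) := by
        have heq : Sv p hf (i : ℕ) u - (Sv p hf (i : ℕ) u - (p ^ f - 1)) = p ^ f - 1 := by
          omega
        rw [heq]
      exact (Nat.modEq_iff_dvd' (by omega)).mpr h
    · show (c - 1) * (p ^ f - 1) < Sv p hf (i : ℕ) u - (p ^ f - 1)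
      have h1 := hu i
      omega
    · show p * (Sv p hf ((nx i : Fin f) : ℕ) u - (p ^ f - 1))
          ≤ (Sv p hf (i : ℕ) u - (p ^ f - 1)) + (p ^ f - 1) * u i
      have hs := Sv_succ' hf hp u i
      rw [← hSvnx u i] at hs
      have hle' := hQle (nx i)
      have hmul : p * (Sv p hf ((nx i : Fin f) : ℕ) u - (p ^ f - 1))
          = p * Sv p hf ((nx i : Fin f) : ℕ) u - p * (p ^ f - 1) := Nat.mul_sub _ _ _
      have hppQ : p ^ f - 1 ≤ p * (p ^ f - 1) := Nat.le_mul_of_pos_left _ hp0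
      omega
  -- the minimum
  set T : Fin f → Set ℕ := fun i => {v : ℕ | ∃ Z, Good Z ∧ Z i = v} with hT
  have hne : ∀ i, (T i).Nonempty := fun i => ⟨_, ⟨_, hG1, rfl⟩⟩
  set M : Fin f → ℕ := fun i => sInf (T i) with hM
  have hattain : ∀ i : Fin f, ∃ Z, Good Z ∧ Z i = M i := fun i => Nat.sInf_mem (hne i)
  have hMle : ∀ Z, Good Z → ∀ i, M i ≤ Z i := fun Z hZ i => Nat.sInf_le ⟨Z, hZ, rfl⟩
  have hGoodM : Good M := by
    intro i
    obtain ⟨Z, hZ, hZi⟩ := hattain i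
    refine ⟨hZi ▸ (hZ i).1, hZi ▸ (hZ i).2.1, ?_⟩
    calc p * M (nx i) ≤ p * Z (nx i) := Nat.mul_le_mul_left _ (hMle Z hZ _)
      _ ≤ Z i + (p ^ f - 1) * u i := (hZ i).2.2
      _ = M i + (p ^ f - 1) * u i := by rw [hZi]
  -- congruence facts
  have hMcong : ∀ i : Fin f, M i ≡ Sv p hf (i : ℕ) u [MOD (p ^ f - 1)] := fun i => (hGoodM i).1
  have hpMcong : ∀ i : Fin f, p * M (nx i) ≡ M i [MOD (p ^ f - 1)] := by
    intro i
    have h1 : p * M (nx i) ≡ p * Sv p hf ((nx i : Fin f) : ℕ) u [MOD (p ^ f - 1)] :=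
      (hMcong (nx i)).mul_left p
    have h2 : p * Sv p hf ((nx i : Fin f) : ℕ) u = Sv p hf (i : ℕ) u + (p ^ f - 1) * u i := by
      rw [hSvnx u i]
      exact Sv_succ' hf hp u i
    rw [h2] at h1
    have h3 : Sv p hf (i : ℕ) u + (p ^ f - 1) * u i ≡ Sv p hf (i : ℕ) u + 0 [MOD (p ^ f - 1)] :=
      Nat.ModEq.add_left _ ((Nat.modEq_zero_iff_dvd).mpr (Dvd.intro _ rfl))
    rw [Nat.add_zero] at h3
    exact (h1.trans h3).trans (hMcong i).symm
  -- minimality: M i ≤ p * M (nx i)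
  have hP2 : ∀ i : Fin f, M i ≤ p * M (nx i) := by
    by_contra hcon
    push_neg at hcon
    obtain ⟨i, hi⟩ := hcon
    have hii : nx i ≠ i := by
      intro h
      rw [h] at hi
      have : M i ≤ p * M i := Nat.le_mul_of_pos_left _ hp0
      omega
    set Z' : Fin f → ℕ := Function.update M i (p * M (nx i)) with hZ'
    have hZ'val : ∀ k : Fin f, Z' k = if k = i then p * M (nx i) else M k := by
      intro k
      by_cases h : k = i
      · rw [h]; simp [hZ']
      · simp [hZ', h]
    have hGoodZ' : Good Z' := by
      intro k
      by_cases hk : k = i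
      · subst hk
        refine ⟨?_, ?_, ?_⟩
        · rw [hZ'val k, if_pos rfl]
          exact (hpMcong k).trans (hMcong k)
        · rw [hZ'val k, if_pos rfl]
          have h1 : M (nx k) ≤ p * M (nx k) := Nat.le_mul_of_pos_left _ hp0
          have h2 := (hGoodM (nx k)).2.1
          omega
        · rw [hZ'val k, if_pos rfl, hZ'val (nx k), if_neg hii]
          omega
      · refine ⟨?_, ?_, ?_⟩
        · rw [hZ'val k, if_neg hk]; exact (hGoodM k).1
        · rw [hZ'val k, if_neg hk]; exact (hGoodM k).2.1
        · rw [hZ'val k, if_neg hk]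
          by_cases hnk : nx k = i
          · rw [hZ'val (nx k), if_pos hnk]
            have h1 : p * (p * M (nx i)) ≤ p * M i := Nat.mul_le_mul_left _ (le_of_lt hi)
            have h2 := (hGoodM k).2.2
            rw [hnk] at h2
            omega
          · rw [hZ'val (nx k), if_neg hnk]
            exact (hGoodM k).2.2
    have : M i ≤ Z' i := hMle Z' hGoodZ' i
    rw [hZ'val i, if_pos rfl] at this
    omega
  -- upper bound for M
  have hMub : ∀ i : Fin f, M i + (p ^ f - 1) ≤ Sv p hf (i : ℕ) u := by
    intro i
    have h1 := hMle _ hG2 i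
    have h2 := hQle i
    omega
  -- define r and w
  have hdvd_r : ∀ i : Fin f, (p ^ f - 1) ∣ (p * M (nx i) - M i) :=
    fun i => (Nat.modEq_iff_dvd' (hP2 i)).mp (hpMcong i).symm
  set r : Fin f → ℕ := fun i => (p * M (nx i) - M i) / (p ^ f - 1) with hr
  have hrQ : ∀ i : Fin f, r i * (p ^ f - 1) = p * M (nx i) - M i :=
    fun i => Nat.div_mul_cancel (hdvd_r i)
  have hrle : ∀ i : Fin f, r i ≤ u i := by
    intro i
    have h1 := (hGoodM i).2.2
    have h2 := hrQ i
    have h3 := hP2 i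
    have h4 : r i * (p ^ f - 1) ≤ u i * (p ^ f - 1) := by
      rw [h2, mul_comm (u i)]
      omega
    exact Nat.le_of_mul_le_mul_right (by omega) (by omega : 0 < p ^ f - 1)
  set w : Fin f → ℕ := fun i => u i - r i with hw
  have hwr : ∀ i, w i + r i = u i := by
    intro i
    have := hrle i
    simp only [hw]
    omega
  -- Sv of r is M (telescoping)
  have hSvr : ∀ i : Fin f, Sv p hf (i : ℕ) r = M i := by
    intro i
    have hcast : ((Sv p hf (i : ℕ) r : ℕ) : ℤ) * ((p ^ f - 1 : ℕ) : ℤ)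
        = ((M i : ℕ) : ℤ) * ((p ^ f - 1 : ℕ) : ℤ) := by
      have hterm : ∀ j, j ∈ Finset.range f →
          ((p : ℤ) ^ j * (r ⟨((i : ℕ) + j) % f, Nat.mod_lt _ hf⟩ : ℤ)) * ((p ^ f - 1 : ℕ) : ℤ)
          = ((p : ℤ) ^ (j+1) * (M ⟨((i : ℕ) + (j+1)) % f, Nat.mod_lt _ hf⟩ : ℤ)
            - (p : ℤ) ^ j * (M ⟨((i : ℕ) + j) % f, Nat.mod_lt _ hf⟩ : ℤ)) := by
        intro j _
        set k : Fin f := ⟨((i : ℕ) + j) % f, Nat.mod_lt _ hf⟩ with hkdef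
        have hnxk : nx k = ⟨((i : ℕ) + (j + 1)) % f, Nat.mod_lt _ hf⟩ := by
          apply Fin.ext
          show (((i : ℕ) + j) % f + 1) % f = ((i : ℕ) + (j + 1)) % f
          rw [Nat.mod_add_mod, ← Nat.add_assoc]
        have h1 := hrQ k
        have h2 := hP2 k
        have hZ : ((r k : ℕ) : ℤ) * ((p ^ f - 1 : ℕ) : ℤ)
            = (p : ℤ) * ((M (nx k) : ℕ) : ℤ) - ((M k : ℕ) : ℤ) := by
          have := congrArg (Nat.cast : ℕ → ℤ) h1
          push_cast [Nat.cast_sub h2] at this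
          linarith [this]
        rw [hnxk] at hZ
        calc ((p : ℤ) ^ j * (r k : ℤ)) * ((p ^ f - 1 : ℕ) : ℤ)
            = (p : ℤ) ^ j * ((r k : ℤ) * ((p ^ f - 1 : ℕ) : ℤ)) := by ring
          _ = (p : ℤ) ^ j * ((p : ℤ) * ((M ⟨((i : ℕ) + (j+1)) % f, Nat.mod_lt _ hf⟩ : ℕ) : ℤ)
              - ((M k : ℕ) : ℤ)) := by rw [hZ]
          _ = _ := by rw [hkdef]; ring
      calc ((Sv p hf (i : ℕ) r : ℕ) : ℤ) * ((p ^ f - 1 : ℕ) : ℤ)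
          = (∑ j ∈ Finset.range f, (p : ℤ) ^ j * (r ⟨((i : ℕ) + j) % f, Nat.mod_lt _ hf⟩ : ℤ))
            * ((p ^ f - 1 : ℕ) : ℤ) := by
            congr 1
            unfold Sv
            push_cast
            rfl
        _ = ∑ j ∈ Finset.range f, ((p : ℤ) ^ j * (r ⟨((i : ℕ) + j) % f, Nat.mod_lt _ hf⟩ : ℤ))
            * ((p ^ f - 1 : ℕ) : ℤ) := by rw [Finset.sum_mul]
        _ = ∑ j ∈ Finset.range f, ((p : ℤ) ^ (j+1) * (M ⟨((i : ℕ) + (j+1)) % f, Nat.mod_lt _ hf⟩ : ℤ)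
            - (p : ℤ) ^ j * (M ⟨((i : ℕ) + j) % f, Nat.mod_lt _ hf⟩ : ℤ)) :=
            Finset.sum_congr rfl hterm
        _ = (p : ℤ) ^ f * ((M ⟨((i : ℕ) + f) % f, Nat.mod_lt _ hf⟩ : ℕ) : ℤ)
            - (p : ℤ) ^ 0 * ((M ⟨((i : ℕ) + 0) % f, Nat.mod_lt _ hf⟩ : ℕ) : ℤ) :=
            Finset.sum_range_sub (fun j => (p : ℤ) ^ j * (M ⟨((i : ℕ) + j) % f, Nat.mod_lt _ hf⟩ : ℤ)) f
        _ = ((M i : ℕ) : ℤ) * ((p ^ f - 1 : ℕ) : ℤ) := by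
            have hIdx1 : (⟨((i : ℕ) + f) % f, Nat.mod_lt _ hf⟩ : Fin f) = i := by
              apply Fin.ext
              show ((i : ℕ) + f) % f = (i : ℕ)
              rw [Nat.add_mod_right]
              exact Nat.mod_eq_of_lt i.isLt
            have hIdx2 : (⟨((i : ℕ) + 0) % f, Nat.mod_lt _ hf⟩ : Fin f) = i := by
              apply Fin.ext
              show ((i : ℕ) + 0) % f = (i : ℕ)
              rw [Nat.add_zero]
              exact Nat.mod_eq_of_lt i.isLt
            rw [hIdx1, hIdx2]
            rw [Nat.cast_sub (by omega : 1 ≤ p ^ f)]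
            push_cast
            ring
    have := mul_right_cancel₀ (b := ((p ^ f - 1 : ℕ) : ℤ)) (by
      simp only [ne_eq, Nat.cast_eq_zero]
      omega) hcast
    exact_mod_cast this
  -- Sv of w
  have hSvw : ∀ i : Fin f, Sv p hf (i : ℕ) w + M i = Sv p hf (i : ℕ) u := by
    intro i
    have hfun : w + r = u := funext hwr
    calc Sv p hf (i : ℕ) w + M i = Sv p hf (i : ℕ) w + Sv p hf (i : ℕ) r := by rw [hSvr i]
      _ = Sv p hf (i : ℕ) (w + r) := (Sv_add hf _ w r).symm
      _ = Sv p hf (i : ℕ) u := by rw [hfun]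
  -- conclusions
  have hSvw0 : Sv p hf 0 w + M ⟨0 % f, Nat.mod_lt _ hf⟩ = Sv p hf 0 u := by
    have h := hSvw ⟨0 % f, Nat.mod_lt _ hf⟩
    have hv : ((⟨0 % f, Nat.mod_lt _ hf⟩ : Fin f) : ℕ) = 0 := Nat.zero_mod f
    rw [hv] at h
    exact h
  refine ⟨w, fun i => by simp only [hw]; omega, ?_, ?_, ?_⟩
  · -- w ≠ 0
    intro h0
    have h1 := hSvw0
    have h2 := hMub ⟨0 % f, Nat.mod_lt _ hf⟩
    have hv : ((⟨0 % f, Nat.mod_lt _ hf⟩ : Fin f) : ℕ) = 0 := Nat.zero_mod f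
    rw [hv] at h2
    rw [h0, Sv_zero] at h1
    omega
  · -- divisibility
    have hcong := hMcong ⟨0 % f, Nat.mod_lt _ hf⟩
    have hv : ((⟨0 % f, Nat.mod_lt _ hf⟩ : Fin f) : ℕ) = 0 := Nat.zero_mod f
    rw [hv] at hcong
    have hle : M ⟨0 % f, Nat.mod_lt _ hf⟩ ≤ Sv p hf 0 u := by
      have := hMub ⟨0 % f, Nat.mod_lt _ hf⟩
      rw [hv] at this
      omega
    have hdvd := (Nat.modEq_iff_dvd' hle).mp hcong
    have heq : Sv p hf 0 u - M ⟨0 % f, Nat.mod_lt _ hf⟩ = Sv p hf 0 w := by omega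
    rwa [heq] at hdvd
  · -- the bound
    intro i
    have h1 := hSvw i
    have h2 := (hGoodM i).2.1
    omega

end Sheats

namespace Sheats

variable {p f : ℕ}

lemma Jfrak_iff (hf : 0 < f) (hp : 1 < p) (u : Fin f → ℕ) :
    u ∈ Jfrak p f ↔ (u ≠ 0 ∧ (p ^ f - 1) ∣ Sv p hf 0 u) := by
  constructor
  · rintro ⟨n, hn, hdvd, rfl⟩
    refine ⟨Gamma_ne_zero hf hp hn, ?_⟩
    have h := n_modEq_Sv_Gamma hf hp n
    exact (Nat.modEq_zero_iff_dvd).mp (h.symm.trans ((Nat.modEq_zero_iff_dvd).mpr hdvd))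
  · rintro ⟨hu, hdvd⟩
    obtain ⟨n, hn, hΓ⟩ := Gamma_surj hf hp hu
    refine ⟨n, hn, ?_, hΓ⟩
    have h := n_modEq_Sv_Gamma hf hp n
    rw [hΓ] at h
    exact (Nat.modEq_zero_iff_dvd).mp (h.trans ((Nat.modEq_zero_iff_dvd).mpr hdvd))

lemma main_decomp (hf : 0 < f) (hp : 1 < p) :
    ∀ (d : ℕ) (u : Fin f → ℕ), u ≠ 0 →
    (∀ i : Fin f, d * (p ^ f - 1) < Sv p hf (i : ℕ) u) →
    ∃ v : Fin d → Fin f → ℕ, (∀ j, v j ∈ Jfrak p f) ∧ ∑ j, v j < u := by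
  intro d
  induction d with
  | zero =>
    intro u hu _
    refine ⟨fun j => j.elim0, fun j => j.elim0, ?_⟩
    have hsum : (∑ j : Fin 0, (fun j : Fin 0 => j.elim0 : Fin 0 → Fin f → ℕ) j)
        = (0 : Fin f → ℕ) := by simp
    rw [hsum, Pi.lt_def]
    obtain ⟨k, hk⟩ := Function.ne_iff.mp hu
    have hk' : u k ≠ 0 := hk
    refine ⟨fun i => Nat.zero_le _, k, ?_⟩
    show (0 : Fin f → ℕ) k < u k
    simp only [Pi.zero_apply]
    omega
  | succ d ih =>
    intro u hu hS
    obtain ⟨w, hwle, hwne, hwdvd, hwb⟩ :=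
      step_lemma hf hp (d + 1) (Nat.succ_le_succ (Nat.zero_le d)) u hS
    set u' : Fin f → ℕ := fun i => u i - w i with hu'def
    have h1 : ∀ i, w i + u' i = u i := by
      intro i
      have := hwle i
      simp only [hu'def]
      omega
    have hfun : w + u' = u := funext h1
    have hSsum : ∀ i : Fin f, Sv p hf (i : ℕ) w + Sv p hf (i : ℕ) u' = Sv p hf (i : ℕ) u := by
      intro i
      rw [← Sv_add hf, hfun]
    have hd : ∀ i : Fin f, d * (p ^ f - 1) < Sv p hf (i : ℕ) u' := by
      intro i
      have hb := hwb i
      have heq : (d + 1) - 1 = d := rfl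
      rw [heq] at hb
      have := hSsum i
      omega
    have hu'ne : u' ≠ 0 := by
      have h2 := hd ⟨0 % f, Nat.mod_lt _ hf⟩
      have h3 : 0 < Sv p hf ((⟨0 % f, Nat.mod_lt _ hf⟩ : Fin f) : ℕ) u' := by omega
      exact Sv_ne_zero hf (by omega) h3
    obtain ⟨v', hv', hlt⟩ := ih u' hu'ne hd
    refine ⟨Fin.cons w v', ?_, ?_⟩
    · intro j
      refine Fin.cases ?_ ?_ j
      · rw [Fin.cons_zero]
        exact (Jfrak_iff hf hp w).mpr ⟨hwne, hwdvd⟩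
      · intro j'
        rw [Fin.cons_succ]
        exact hv' j'
    · rw [Fin.sum_cons]
      calc w + ∑ j, v' j < w + u' := (add_lt_add_iff_left w).mpr hlt
        _ = u := hfun

lemma Iset_eq (hf : 0 < f) (hp : 1 < p) (m : ℕ) (hm : 1 ≤ m) :
    Iset p f m = {u : Fin f → ℕ | u ≠ 0 ∧ ∃ x : Fin f → ℝ,
        (fun i => (u i : ℝ)) = Emap p x ∧ ∀ i, (m : ℝ) - 1 < x i} := by
  have hp0 : 0 < p := by omega
  have hQ1 : 1 < p ^ f := Nat.one_lt_pow hf.ne' hp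
  have hQRpos : (0 : ℝ) < ((p ^ f - 1 : ℕ) : ℝ) := by
    exact_mod_cast (by omega : 0 < p ^ f - 1)
  have hcast : ((m - 1 : ℕ) : ℝ) = (m : ℝ) - 1 := by
    rw [Nat.cast_sub hm, Nat.cast_one]
  ext u
  simp only [Iset, Set.mem_setOf_eq]
  constructor
  · rintro ⟨⟨n, hn, hΓ⟩, v, hv, hlt⟩
    have hune : u ≠ 0 := hΓ ▸ Gamma_ne_zero hf hp hn
    refine ⟨hune, xr p hf u, Emap_xr hf hp u, ?_⟩
    intro i
    -- lower bound on Sv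
    rw [Pi.lt_def] at hlt
    obtain ⟨hle, k, hk⟩ := hlt
    set s : Fin f → ℕ := ∑ j, v j with hs
    set δ : Fin f → ℕ := fun i => u i - s i with hδ
    have hsd : s + δ = u := by
      funext i'
      have hle' : s i' ≤ u i' := Pi.le_def.mp hle i'
      simp only [hδ, Pi.add_apply]
      omega
    have hSu : Sv p hf (i : ℕ) s + Sv p hf (i : ℕ) δ = Sv p hf (i : ℕ) u := by
      rw [← Sv_add hf, hsd]
    have hSs : (m - 1) * (p ^ f - 1) ≤ Sv p hf (i : ℕ) s := by
      rw [hs, Sv_sum hf]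
      have hterm : ∀ j : Fin (m - 1), j ∈ Finset.univ →
          (p ^ f - 1) ≤ Sv p hf (i : ℕ) (v j) := by
        intro j _
        obtain ⟨hne, hdvd0⟩ := (Jfrak_iff hf hp (v j)).mp (hv j)
        have hdvd := dvd_Sv_all hf hp0 hdvd0 (i : ℕ)
        exact Nat.le_of_dvd (Sv_pos hf hp0 _ hne) hdvd
      calc (m - 1) * (p ^ f - 1)
          = (Finset.univ : Finset (Fin (m - 1))).card • (p ^ f - 1) := by
            rw [Finset.card_univ, Fintype.card_fin, smul_eq_mul]
        _ ≤ ∑ j, Sv p hf (i : ℕ) (v j) := Finset.card_nsmul_le_sum _ _ _ hterm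
    have hSδ : 0 < Sv p hf (i : ℕ) δ := by
      apply Sv_pos hf hp0
      intro h0
      have := congrFun h0 k
      simp only [hδ, Pi.zero_apply] at this
      omega
    have hSub : (m - 1) * (p ^ f - 1) < Sv p hf (i : ℕ) u := by omega
    -- to the reals
    show (m : ℝ) - 1 < (Sv p hf (i : ℕ) u : ℝ) / ((p ^ f - 1 : ℕ) : ℝ)
    rw [← hcast, lt_div_iff₀ hQRpos]
    exact_mod_cast hSub
  · rintro ⟨hu, x, hx, hb⟩
    have hxr := E_unique hf hp u x hx
    have hSb : ∀ i : Fin f, (m - 1) * (p ^ f - 1) < Sv p hf (i : ℕ) u := by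
      intro i
      have h1 := hb i
      rw [hxr i, ← hcast, lt_div_iff₀ hQRpos] at h1
      exact_mod_cast h1
    constructor
    · obtain ⟨n, hn, hΓ⟩ := Gamma_surj hf hp hu
      exact ⟨n, hn, hΓ⟩
    · exact main_decomp hf hp (m - 1) u hu hSb

end Sheats

/-- Sheats: characterization of `I_m` and `J_m` via `E`. -/
theorem Iset_Jset_characterization
    (p f : ℕ) (hp : p.Prime) (hf : 0 < f) (m : ℕ) (hm : 1 ≤ m) :
    (Iset p f m = {u : Fin f → ℕ | u ≠ 0 ∧ ∃ x : Fin f → ℝ,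
        (fun i => (u i : ℝ)) = Emap p x ∧ ∀ i, (m : ℝ) - 1 < x i}) ∧
    (Jset p f m = {u : Fin f → ℕ | u ≠ 0 ∧ ∃ a : Fin f → ℝ,
        (fun i => (u i : ℝ)) = Emap p a ∧ (∀ i, (m : ℝ) ≤ a i) ∧ ∃ i, a i = (m : ℝ)}) := by
  have hp2 : 1 < p := hp.one_lt
  have hQ1 : 1 < p ^ f := Nat.one_lt_pow hf.ne' hp2
  have hQRpos : (0 : ℝ) < ((p ^ f - 1 : ℕ) : ℝ) := by
    exact_mod_cast (by omega : 0 < p ^ f - 1)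
  have hcast : ((m - 1 : ℕ) : ℝ) = (m : ℝ) - 1 := by rw [Nat.cast_sub hm, Nat.cast_one]
  have hIm := Sheats.Iset_eq (p := p) hf hp2 m hm
  have hIm1 := Sheats.Iset_eq (p := p) hf hp2 (m + 1) (by omega)
  refine ⟨hIm, ?_⟩
  unfold Jset
  rw [if_neg (by omega : ¬ m = 0)]
  ext u
  simp only [Set.mem_inter_iff, Set.mem_diff, Set.mem_setOf_eq]
  constructor
  · rintro ⟨huJ, huI, huNI⟩
    obtain ⟨hune, hdvd0⟩ := (Sheats.Jfrak_iff hf hp2 u).mp huJ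
    have hdvd : ∀ i : ℕ, (p ^ f - 1) ∣ Sheats.Sv p hf i u :=
      Sheats.dvd_Sv_all hf (by omega) hdvd0
    rw [hIm, Set.mem_setOf_eq] at huI
    obtain ⟨-, x, hx, hbx⟩ := huI
    have hxr := Sheats.E_unique hf hp2 u x hx
    have hge : ∀ i : Fin f, m * (p ^ f - 1) ≤ Sheats.Sv p hf (i : ℕ) u := by
      intro i
      have h1 := hbx i
      rw [hxr i, ← hcast, lt_div_iff₀ hQRpos] at h1
      have h2 : (m - 1) * (p ^ f - 1) < Sheats.Sv p hf (i : ℕ) u := by exact_mod_cast h1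
      obtain ⟨t, ht⟩ := hdvd (i : ℕ)
      rw [ht] at h2 ⊢
      have h4 : (p ^ f - 1) * (m - 1) < (p ^ f - 1) * t := by
        calc (p ^ f - 1) * (m - 1) = (m - 1) * (p ^ f - 1) := Nat.mul_comm _ _
          _ < (p ^ f - 1) * t := h2
      have h3 : m - 1 < t := Nat.lt_of_mul_lt_mul_left h4
      have h5 : m ≤ t := by omega
      calc m * (p ^ f - 1) = (p ^ f - 1) * m := Nat.mul_comm _ _
        _ ≤ (p ^ f - 1) * t := Nat.mul_le_mul_left _ h5
    have hmle : ∀ i : Fin f, (m : ℝ) ≤ Sheats.xr p hf u i := by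
      intro i
      show (m : ℝ) ≤ (Sheats.Sv p hf (i : ℕ) u : ℝ) / ((p ^ f - 1 : ℕ) : ℝ)
      rw [le_div_iff₀ hQRpos]
      exact_mod_cast hge i
    refine ⟨hune, Sheats.xr p hf u, Sheats.Emap_xr hf hp2 u, hmle, ?_⟩
    have hnall : ¬ ∀ i : Fin f, ((m + 1 : ℕ) : ℝ) - 1 < Sheats.xr p hf u i := by
      intro hall
      apply huNI
      rw [hIm1, Set.mem_setOf_eq]
      exact ⟨hune, Sheats.xr p hf u, Sheats.Emap_xr hf hp2 u, hall⟩
    push_neg at hnall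
    obtain ⟨i, hi⟩ := hnall
    have hieq : ((m + 1 : ℕ) : ℝ) - 1 = (m : ℝ) := by push_cast; ring
    rw [hieq] at hi
    exact ⟨i, le_antisymm hi (hmle i)⟩
  · rintro ⟨hune, a, ha, hage, i₀, hai₀⟩
    have hxa := Sheats.E_unique hf hp2 u a ha
    have h1 : ((Sheats.Sv p hf (i₀ : ℕ) u : ℕ) : ℝ) = (m : ℝ) * ((p ^ f - 1 : ℕ) : ℝ) := by
      have h2 := hxa i₀
      rw [hai₀] at h2
      rw [eq_div_iff hQRpos.ne'] at h2
      exact h2.symm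
    have h2 : Sheats.Sv p hf (i₀ : ℕ) u = m * (p ^ f - 1) := by exact_mod_cast h1
    have hdvd0 : (p ^ f - 1) ∣ Sheats.Sv p hf (i₀ : ℕ) u := ⟨m, by rw [h2, Nat.mul_comm]⟩
    have hdvd := Sheats.dvd_Sv_all hf (by omega : 0 < p) hdvd0
    refine ⟨?_, ?_, ?_⟩
    · exact (Sheats.Jfrak_iff hf hp2 u).mpr ⟨hune, hdvd 0⟩
    · rw [hIm, Set.mem_setOf_eq]
      refine ⟨hune, a, ha, fun i => ?_⟩
      have := hage i
      linarith
    · rw [hIm1, Set.mem_setOf_eq]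
      rintro ⟨-, x, hx, hbx⟩
      have hxx := Sheats.E_unique hf hp2 u x hx
      have hxi : x i₀ = a i₀ := by rw [hxx i₀, hxa i₀]
      have hb := hbx i₀
      rw [hxi, hai₀] at hb
      push_cast at hb
      linarith
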